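/- Let G be a locally compact group, H a closed normal cocompact subgroup with G = P·H for a relatively compact measurable section P of G/H, (V, π) a uniformly bounded Banach G-module, and b ∈ Z¹(G, V). If b is an almost coboundary in restriction to H, then b is an almost coboundary on G. -/

import Mathlib

open MeasureTheory Set
open scoped Pointwise

/-- let `H` be a closed normal cocompact subgroup of a locally compact
group `G`, with a relatively compact measurable section `P` (so `G = P·H`). If a continuous
1-cocycle `b` on a uniformly bounded Banach `G`-module is an almost coboundary in
restriction to `H`, then it is an almost coboundary on `G`. -/
theorem stmt19 {G V : Type*} [Group G] [TopologicalSpace G] [IsTopologicalGroup G]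
    [LocallyCompactSpace G] [MeasurableSpace G] [BorelSpace G]
    (μ : Measure G) [μ.IsHaarMeasure]
    [NormedAddCommGroup V] [NormedSpace ℝ V] [CompleteSpace V]
    (H : Subgroup G) [H.Normal] (hHclosed : IsClosed (H : Set G))
    (P : Set G) (hPmeas : MeasurableSet P) (hPbdd : IsCompact (closure P))
    (hsection : ∀ g : G, ∃ p ∈ P, ∃ h ∈ H, g = p * h)
    (ρ : G →* (V →L[ℝ] V)) (hcont : ∀ v : V, Continuous fun g => ρ g v)
    (hub : ∃ C : ℝ, ∀ g : G, ‖ρ g‖ ≤ C)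
    (b : G → V) (hbcont : Continuous b)
    (hcoc : ∀ g h : G, b (g * h) = ρ g (b h) + b g)
    (hHac : ∀ ε : ℝ, 0 < ε → ∀ Q : Set G, Q ⊆ (H : Set G) → IsCompact Q →
      ∃ v : V, ∀ h ∈ Q, ‖ρ h v + b h - v‖ ≤ ε) :
    ∀ ε : ℝ, 0 < ε → ∀ Q : Set G, IsCompact Q →
      ∃ v : V, ∀ g ∈ Q, ‖ρ g v + b g - v‖ ≤ ε := by
  classical
  obtain ⟨C₀, hC₀⟩ := hub
  set C : ℝ := max C₀ 1 with hCdef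
  have hC1 : (1:ℝ) ≤ C := le_max_right _ _
  have hCpos : (0:ℝ) < C := lt_of_lt_of_le one_pos hC1
  have hρ : ∀ (g : G) (w : V), ‖ρ g w‖ ≤ C * ‖w‖ := fun g w =>
    le_trans ((ρ g).le_opNorm w)
      (mul_le_mul_of_nonneg_right (le_trans (hC₀ g) (le_max_left _ _)) (norm_nonneg w))
  intro ε hε Q hQ
  have hden : (0:ℝ) < 2*C^2 + 3*C := by nlinarith
  set δ : ℝ := ε / (2*C^2 + 3*C) with hδdef
  have hδpos : 0 < δ := div_pos hε hden
  set P' : Set G := closure P with hP'def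
  have hPP' : P ⊆ P' := subset_closure
  have hP'c : IsCompact P' := hPbdd
  -- a representative in `P` for each coset
  have hrep : ∀ c : G ⧸ H, ∃ p : G, p ∈ P ∧ (QuotientGroup.mk p : G ⧸ H) = c := by
    intro c
    obtain ⟨g, rfl⟩ := QuotientGroup.mk_surjective c
    obtain ⟨p, hp, h, hh, rfl⟩ := hsection g
    refine ⟨p, hp, ?_⟩
    have : (QuotientGroup.mk h : G ⧸ H) = 1 := (QuotientGroup.eq_one_iff h).2 hh
    simp [QuotientGroup.mk_mul, this]
  choose rep hrepP hrepmk using hrep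
  -- the compact subset of `H` on which we need almost-invariance
  set KH : Set G := ((P'⁻¹ * P') ∩ (H : Set G)) ∪ ((P'⁻¹ * (Q * P')) ∩ (H : Set G)) with hKHdef
  have hKHH : KH ⊆ (H : Set G) := union_subset inter_subset_right inter_subset_right
  have hKHc : IsCompact KH :=
    ((hP'c.inv.mul hP'c).inter_right hHclosed).union
      ((hP'c.inv.mul (hQ.mul hP'c)).inter_right hHclosed)
  obtain ⟨v, hv⟩ := hHac δ hδpos KH hKHH hKHc
  set u : G → V := fun x => ρ x v + b x with hudef
  have hsig : ∀ a c : G, u (a * c) = ρ a (u c) + b a := by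
    intro a c
    simp only [hudef, hcoc a c, map_mul, ContinuousLinearMap.mul_apply, map_add]
    abel
  -- the open set where the displacement is `< 2δ`
  set O : Set G := {w : G | ‖ρ w v + b w - v‖ < 2*δ} with hOdef
  have hOopen : IsOpen O := by
    have hcn : Continuous fun w : G => ‖ρ w v + b w - v‖ :=
      (((hcont v).add hbcont).sub continuous_const).norm
    exact isOpen_lt hcn continuous_const
  have hKH_O : ∀ w ∈ KH, w ∈ O := fun w hw => lt_of_le_of_lt (hv w hw) (by nlinarith)
  -- quotient group setup
  haveI : IsClosed (H : Set G) := hHclosed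
  letI : MeasurableSpace (G ⧸ H) := borel _
  haveI : BorelSpace (G ⧸ H) := ⟨rfl⟩
  haveI : CompactSpace (G ⧸ H) := by
    constructor
    have himg : IsCompact (QuotientGroup.mk '' P' : Set (G ⧸ H)) :=
      hP'c.image QuotientGroup.continuous_mk
    have huniv : (univ : Set (G ⧸ H)) = QuotientGroup.mk '' P' := by
      refine Subset.antisymm (fun c _ => ⟨rep c, hPP' (hrepP c), hrepmk c⟩) (subset_univ _)
    rw [huniv]; exact himg
  set K₀ : TopologicalSpace.PositiveCompacts (G ⧸ H) :=
    ⟨⟨univ, isCompact_univ⟩, by rw [interior_univ]; exact univ_nonempty⟩ with hK₀def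
  set ν : Measure (G ⧸ H) := Measure.haarMeasure K₀ with hνdef
  haveI hνinv : ν.IsMulLeftInvariant := by rw [hνdef]; infer_instance
  haveI hνprob : IsProbabilityMeasure ν := by
    constructor
    have : ν (K₀ : Set (G ⧸ H)) = 1 := by rw [hνdef]; exact Measure.haarMeasure_self
    simpa [hK₀def] using this
  -- the small neighborhood `W` of `1` in the quotient
  set D : Set G := (P'⁻¹ * P') ∩ Oᶜ with hDdef
  have hDc : IsCompact D := (hP'c.inv.mul hP'c).inter_right hOopen.isClosed_compl
  set W : Set (G ⧸ H) := (QuotientGroup.mk '' D)ᶜ with hWdef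
  have hWopen : IsOpen W := (hDc.image QuotientGroup.continuous_mk).isClosed.isOpen_compl
  have h1W : (1 : G ⧸ H) ∈ W := by
    rw [hWdef, mem_compl_iff]
    rintro ⟨d, hdD, hd1⟩
    have hdH : d ∈ H := (QuotientGroup.eq_one_iff d).1 hd1
    exact hdD.2 (hKH_O d (Or.inl ⟨hdD.1, hdH⟩))
  have hWkey : ∀ w : G, w ∈ P'⁻¹ * P' → (QuotientGroup.mk w : G ⧸ H) ∈ W → w ∈ O := by
    intro w hw hmem
    by_contra hwO
    exact hmem ⟨w, ⟨hw, hwO⟩, rfl⟩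
  -- finite cover of the quotient
  set U : (G ⧸ H) → Set (G ⧸ H) := fun c => (fun d => c⁻¹ * d) ⁻¹' W with hUdef
  have hUopen : ∀ c, IsOpen (U c) := fun c =>
    hWopen.preimage (continuous_const.mul continuous_id)
  have hUself : ∀ c, c ∈ U c := by
    intro c
    show c⁻¹ * c ∈ W
    rwa [inv_mul_cancel]
  obtain ⟨t, ht⟩ := isCompact_univ.elim_finite_subcover U hUopen
    (fun c _ => mem_iUnion.2 ⟨c, hUself c⟩)
  set L : List (G ⧸ H) := t.toList with hLdef
  have hex : ∀ d : G ⧸ H, ∃ k : ℕ, ∃ hk : k < L.length, d ∈ U (L.get ⟨k, hk⟩) := by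
    intro d
    have hd := ht (mem_univ d)
    rw [mem_iUnion₂] at hd
    obtain ⟨c, hct, hdc⟩ := hd
    obtain ⟨i, hi⟩ := List.mem_iff_get.1 ((Finset.mem_toList).2 hct)
    exact ⟨i.1, i.2, by rw [hi]; exact hdc⟩
  set A : Fin L.length → Set (G ⧸ H) := fun i =>
    U (L.get i) \ ⋃ (j : Fin L.length) (_ : j.1 < i.1), U (L.get j) with hAdef
  have hAmeas : ∀ i, MeasurableSet (A i) := fun i =>
    ((hUopen _).measurableSet).diff
      (MeasurableSet.iUnion fun j => MeasurableSet.iUnion fun _ => (hUopen _).measurableSet)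
  have hAU : ∀ i, A i ⊆ U (L.get i) := fun i => diff_subset
  have hAcover : ∀ d : G ⧸ H, ∃ i, d ∈ A i := by
    intro d
    have h := hex d
    obtain ⟨hk, hdU⟩ := Nat.find_spec h
    refine ⟨⟨Nat.find h, hk⟩, hdU, ?_⟩
    rw [mem_iUnion₂]
    rintro ⟨j, hj, hdj⟩
    exact Nat.find_min h hj ⟨j.2, hdj⟩
  have hAuniq : ∀ {i j : Fin L.length} {d : G ⧸ H}, d ∈ A i → d ∈ A j → i = j := by
    intro i j d hi hj
    rcases lt_trichotomy i.1 j.1 with h | h | h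
    · exact absurd (mem_iUnion₂.2 ⟨i, h, hi.1⟩) hj.2
    · exact Fin.ext h
    · exact absurd (mem_iUnion₂.2 ⟨j, h, hj.1⟩) hi.2
  set ubar : (G ⧸ H) → V := fun d =>
    ∑ i : Fin L.length, (A i).indicator (fun _ => u (rep (L.get i))) d with hubardef
  have hubarval : ∀ (d : G ⧸ H) (i : Fin L.length), d ∈ A i → ubar d = u (rep (L.get i)) := by
    intro d i hdi
    simp only [hubardef]
    rw [Finset.sum_eq_single_of_mem i (Finset.mem_univ i)]
    · exact indicator_of_mem hdi _
    · intro j _ hji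
      exact indicator_of_notMem (fun hdj => hji (hAuniq hdj hdi)) _
  have hubarint : Integrable ubar ν := by
    apply integrable_finset_sum
    intro i _
    exact (integrable_indicator_iff (hAmeas i)).2 ((integrable_const _).integrableOn)
  -- key approximation property of `ubar`
  have hstar : ∀ (d : G ⧸ H) (x : G), x ∈ P' → (QuotientGroup.mk x : G ⧸ H) = d →
      ‖ubar d - u x‖ ≤ C * (2*δ) := by
    intro d x hx hxd
    obtain ⟨i, hdi⟩ := hAcover d
    rw [hubarval d i hdi]
    set xi := rep (L.get i) with hxidef
    have hxiP' : xi ∈ P' := hPP' (hrepP _)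
    have hw1 : xi⁻¹ * x ∈ P'⁻¹ * P' :=
      mul_mem_mul (by simpa [Set.mem_inv] using hxiP') hx
    have hw2 : (QuotientGroup.mk (xi⁻¹ * x) : G ⧸ H) ∈ W := by
      have hdU : d ∈ U (L.get i) := hAU i hdi
      have : (L.get i)⁻¹ * d ∈ W := hdU
      have hmk : (QuotientGroup.mk (xi⁻¹ * x) : G ⧸ H) = (L.get i)⁻¹ * d := by
        rw [QuotientGroup.mk_mul, QuotientGroup.mk_inv, hrepmk, hxd]
      rwa [hmk]
    have hwO : xi⁻¹ * x ∈ O := hWkey _ hw1 hw2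
    have hwnorm : ‖u (xi⁻¹ * x) - v‖ ≤ 2*δ := le_of_lt hwO
    have hxeq : x = xi * (xi⁻¹ * x) := by group
    have hdiff : u xi - u x = ρ xi (v - u (xi⁻¹ * x)) := by
      conv_lhs => rw [hxeq, hsig]
      simp only [hudef, map_sub]
      abel
    rw [hdiff]
    calc ‖ρ xi (v - u (xi⁻¹ * x))‖ ≤ C * ‖v - u (xi⁻¹ * x)‖ := hρ _ _
      _ ≤ C * (2*δ) := by
          rw [norm_sub_rev]
          exact mul_le_mul_of_nonneg_left hwnorm hCpos.le
  -- the almost fixed vector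
  refine ⟨∫ d, ubar d ∂ν, ?_⟩
  intro g hg
  set γ : G ⧸ H := QuotientGroup.mk g with hγdef
  have hpt : ∀ d : G ⧸ H, ‖ρ g (ubar d) + b g - ubar (γ * d)‖ ≤ 2*C^2*δ + C*δ + 2*C*δ := by
    intro d
    set x := rep d with hxdef
    set x' := rep (γ * d) with hx'def
    have hxd : (QuotientGroup.mk x : G ⧸ H) = d := hrepmk d
    have hx'd : (QuotientGroup.mk x' : G ⧸ H) = γ * d := hrepmk _
    have h1 : ‖ubar d - u x‖ ≤ C*(2*δ) := hstar d x (hPP' (hrepP d)) hxd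
    have h3 : ‖ubar (γ*d) - u x'‖ ≤ C*(2*δ) := hstar _ x' (hPP' (hrepP _)) hx'd
    set w : G := x'⁻¹ * (g * x) with hwdef
    have hwH : w ∈ (H : Set G) := by
      have hmk : (QuotientGroup.mk w : G ⧸ H) = 1 := by
        rw [hwdef, QuotientGroup.mk_mul, QuotientGroup.mk_inv, QuotientGroup.mk_mul,
          hxd, hx'd, ← hγdef]
        group
      exact (QuotientGroup.eq_one_iff w).1 hmk
    have hwP : w ∈ P'⁻¹ * (Q * P') :=
      mul_mem_mul (by simpa [Set.mem_inv] using hPP' (hrepP (γ * d)))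
        (mul_mem_mul hg (hPP' (hrepP d)))
    have hwKH : w ∈ KH := Or.inr ⟨hwP, hwH⟩
    have hmid : ‖u (g * x) - u x'‖ ≤ C * δ := by
      have hgx : g * x = x' * w := by rw [hwdef]; group
      have hdiff : u (g * x) - u x' = ρ x' (u w - v) := by
        rw [hgx, hsig]
        simp only [hudef, map_sub]
        abel
      rw [hdiff]
      calc ‖ρ x' (u w - v)‖ ≤ C * ‖u w - v‖ := hρ _ _
        _ ≤ C * δ := mul_le_mul_of_nonneg_left (hv w hwKH) hCpos.le
    have hgux : ρ g (u x) + b g = u (g * x) := (hsig g x).symm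
    have decomp : ρ g (ubar d) + b g - ubar (γ*d) =
        ρ g (ubar d - u x) + (u (g*x) - u x') + (u x' - ubar (γ*d)) := by
      rw [map_sub, ← hgux]; abel
    rw [decomp]
    have hn1 : ‖ρ g (ubar d - u x)‖ ≤ 2*C^2*δ := by
      calc ‖ρ g (ubar d - u x)‖ ≤ C * ‖ubar d - u x‖ := hρ _ _
        _ ≤ C * (C * (2*δ)) := mul_le_mul_of_nonneg_left h1 hCpos.le
        _ = 2*C^2*δ := by ring
    have hn3 : ‖u x' - ubar (γ*d)‖ ≤ 2*C*δ := by
      rw [norm_sub_rev]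
      calc ‖ubar (γ*d) - u x'‖ ≤ C*(2*δ) := h3
        _ = 2*C*δ := by ring
    calc ‖ρ g (ubar d - u x) + (u (g*x) - u x') + (u x' - ubar (γ*d))‖
        ≤ ‖ρ g (ubar d - u x)‖ + ‖u (g*x) - u x'‖ + ‖u x' - ubar (γ*d)‖ := norm_add₃_le
      _ ≤ 2*C^2*δ + C*δ + 2*C*δ := by
          exact add_le_add (add_le_add hn1 hmid) hn3
  have hint1 : Integrable (fun d => ρ g (ubar d)) ν := (ρ g).integrable_comp hubarint
  have hint3 : Integrable (fun d => ubar (γ * d)) ν := by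
    have h := (measurePreserving_mul_left ν γ).integrable_comp hubarint.aestronglyMeasurable
    exact h.2 hubarint
  have hadd : Integrable (fun d => ρ g (ubar d) + b g) ν := hint1.add (integrable_const _)
  have key : (∫ d, (ρ g (ubar d) + b g - ubar (γ * d)) ∂ν)
      = ρ g (∫ d, ubar d ∂ν) + b g - ∫ d, ubar d ∂ν := by
    rw [integral_sub hadd hint3,
      integral_add hint1 (integrable_const _),
      integral_const, probReal_univ, one_smul,
      ContinuousLinearMap.integral_comp_comm _ hubarint,
      integral_mul_left_eq_self ubar γ]
  rw [← key]
  refine le_trans (norm_integral_le_of_norm_le_const (Filter.Eventually.of_forall hpt)) ?_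
  rw [probReal_univ, mul_one]
  have hsum : 2*C^2*δ + C*δ + 2*C*δ = ε := by
    rw [hδdef]
    field_simp
    ring
  linarith
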